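/- Let n ≥ 1 and let v₁, …, vₙ : ℝ → ℝ be functions with vᵢ(0) = 0 for all i. Then (ℝ × ℝ, ∗) is a loop: the element (0,0) is a two-sided identity, and for all a, b ∈ ℝ × ℝ there exists a unique y with a ∗ y = b and a unique x with x ∗ a = b. -/

import Mathlib

/-- For `n ≥ 1` and functions `v₁, …, vₙ : ℝ → ℝ` with `vᵢ(0) = 0` (here
`v i = v_{i+1}` for `i : Fin n`), the operation
`(u₁,z₁) ∗ (u₂,z₂) = (u₁+u₂, z₁+z₂ − u₂ v₁(u₁) + u₂² v₂(u₁) + ⋯ + (−1)ⁿ u₂ⁿ vₙ(u₁))`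
makes `ℝ × ℝ` a loop: `(0,0)` is a two-sided identity and the equations
`a ∗ y = b` and `x ∗ a = b` have unique solutions. -/
theorem stmt6
    (n : ℕ) (hn : 1 ≤ n)
    (v : Fin n → ℝ → ℝ) (hv0 : ∀ i, v i 0 = 0)
    (mul : ℝ × ℝ → ℝ × ℝ → ℝ × ℝ)
    (hmul : ∀ a b : ℝ × ℝ, mul a b =
      (a.1 + b.1,
        a.2 + b.2 + ∑ i : Fin n, (-1 : ℝ) ^ ((i : ℕ) + 1) * b.1 ^ ((i : ℕ) + 1) * v i a.1)) :
    (∀ a : ℝ × ℝ, mul (0, 0) a = a ∧ mul a (0, 0) = a) ∧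
      (∀ a b : ℝ × ℝ, (∃! y : ℝ × ℝ, mul a y = b) ∧ (∃! x : ℝ × ℝ, mul x a = b)) := by
  constructor
  · intro a
    constructor
    · rw [hmul]
      simp [hv0]
    · rw [hmul]
      have : ∀ i : Fin n, (-1 : ℝ) ^ ((i : ℕ) + 1) * (0:ℝ) ^ ((i : ℕ) + 1) * v i a.1 = 0 := by
        intro i; simp
      simp only [this, Finset.sum_const_zero]
      simp
  · intro a b
    constructor
    · refine ⟨(b.1 - a.1, b.2 - a.2 - ∑ i : Fin n, (-1 : ℝ) ^ ((i : ℕ) + 1) * (b.1 - a.1) ^ ((i : ℕ) + 1) * v i a.1), ?_, ?_⟩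
      · show mul _ _ = _; rw [hmul]; simp; ring_nf
      · intro y hy
        rw [hmul] at hy
        have h1 : a.1 + y.1 = b.1 := congrArg Prod.fst hy
        have h2 : a.2 + y.2 + ∑ i : Fin n, (-1 : ℝ) ^ ((i : ℕ) + 1) * y.1 ^ ((i : ℕ) + 1) * v i a.1 = b.2 := congrArg Prod.snd hy
        have hy1 : y.1 = b.1 - a.1 := by linarith
        ext
        · exact hy1
        · simp only [hy1] at h2 ⊢
          linarith
    · refine ⟨(b.1 - a.1, b.2 - a.2 - ∑ i : Fin n, (-1 : ℝ) ^ ((i : ℕ) + 1) * a.1 ^ ((i : ℕ) + 1) * v i (b.1 - a.1)), ?_, ?_⟩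
      · show mul _ _ = _; rw [hmul]; simp; ring_nf
      · intro x hx
        rw [hmul] at hx
        have h1 : x.1 + a.1 = b.1 := congrArg Prod.fst hx
        have h2 : x.2 + a.2 + ∑ i : Fin n, (-1 : ℝ) ^ ((i : ℕ) + 1) * a.1 ^ ((i : ℕ) + 1) * v i x.1 = b.2 := congrArg Prod.snd hx
        have hx1 : x.1 = b.1 - a.1 := by linarith
        ext
        · exact hx1
        · simp only [hx1] at h2 ⊢
          linarith
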